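/- A probability measure μ ∈ 𝓜 is empirically stochastically stable if and only if its basin of empiric stochastic stability Â_μ has positive m-measure. -/

import Mathlib

open MeasureTheory Metric Set Filter Topology
open scoped ENNReal NNReal

namespace EmpStoch

variable {M : Type*} [MetricSpace M] [MeasurableSpace M] [BorelSpace M]

/-- The Dirac probability measure `δ_x` at a point `x`. -/
noncomputable def diracProb (x : M) : ProbabilityMeasure M :=
  ⟨MeasureTheory.Measure.dirac x, inferInstance⟩

/-- `dstar` is a metric on the space `𝓜` of Borel probability measures which is
compatible with (i.e. metrizes) the weak* topology. -/
def MetrizesWeakStar (dstar : ProbabilityMeasure M → ProbabilityMeasure M → ℝ) : Prop :=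
  (∀ μ ν, dstar μ ν = 0 ↔ μ = ν) ∧
  (∀ μ ν, dstar μ ν = dstar ν μ) ∧
  (∀ μ ν ξ, dstar μ ξ ≤ dstar μ ν + dstar ν ξ) ∧
  (∀ (μ : ProbabilityMeasure M) (s : Set (ProbabilityMeasure M)),
      s ∈ nhds μ ↔ ∃ ρ > (0 : ℝ), {ν | dstar ν μ < ρ} ⊆ s)

/-- `P ε x` is the transition probability `p_ε(x,·)`, i.e. for every `ε > 0`, every `x`
and every Borel set `A`, `p_ε(x,A) = m(A ∩ B_ε(f x)) / m(B_ε(f x))`. -/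
def IsTransitionKernel (f : M → M) (m : Measure M)
    (P : ℝ → M → ProbabilityMeasure M) : Prop :=
  ∀ ε > (0 : ℝ), ∀ (x : M) (A : Set M), MeasurableSet A →
    (P ε x : Measure M) A = m (A ∩ Metric.ball (f x) ε) / m (Metric.ball (f x) ε)

/-- `Lop ε` is the dual transfer operator `L*_ε : 𝓜 → 𝓜`, characterized by
`∫ φ d(L*_ε μ) = ∫ (∫ φ(y) p_ε(x,dy)) dμ(x)` for every continuous `φ`. -/
def IsDualTransfer (P : ℝ → M → ProbabilityMeasure M)
    (Lop : ℝ → ProbabilityMeasure M → ProbabilityMeasure M) : Prop :=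
  ∀ ε > (0 : ℝ), ∀ (μ : ProbabilityMeasure M) (φ : C(M, ℝ)),
    ∫ y, φ y ∂(Lop ε μ : Measure M) = ∫ x, (∫ y, φ y ∂(P ε x : Measure M)) ∂(μ : Measure M)

/-- `S ε n x` is the empiric stochastic probability
`σ_{ε,n,x} = (1/n) ∑_{j=1}^n (L*_ε)^j δ_x`. -/
def IsEmpiricStochastic (Lop : ℝ → ProbabilityMeasure M → ProbabilityMeasure M)
    (S : ℝ → ℕ → M → ProbabilityMeasure M) : Prop :=
  ∀ ε > (0 : ℝ), ∀ n : ℕ, 1 ≤ n → ∀ x : M,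
    (S ε n x : Measure M) =
      (n : ℝ≥0∞)⁻¹ • ∑ j ∈ Finset.range n, ((Lop ε)^[j + 1] (diracProb x) : Measure M)

/-- `S0 n x` is the zero-noise empiric probability `σ_{n,x} = (1/n) ∑_{j=1}^n δ_{f^j x}`. -/
def IsEmpiricZeroNoise (f : M → M) (S0 : ℕ → M → ProbabilityMeasure M) : Prop :=
  ∀ n : ℕ, 1 ≤ n → ∀ x : M,
    (S0 n x : Measure M) =
      (n : ℝ≥0∞)⁻¹ • ∑ j ∈ Finset.range n, MeasureTheory.Measure.dirac (f^[j + 1] x)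

/-- `pω_x`: the set of all weak* limits of convergent subsequences of `(σ_{n,x})_{n ≥ 1}`. -/
def pOmega (S0 : ℕ → M → ProbabilityMeasure M) (x : M) : Set (ProbabilityMeasure M) :=
  {ν | ∃ φ : ℕ → ℕ, StrictMono φ ∧ (∀ i, 1 ≤ φ i) ∧
    Tendsto (fun i => S0 (φ i) x) atTop (nhds ν)}

/-- The strong basin of statistical attraction `A_μ = {x : pω_x = {μ}}`. -/
def strongBasin (S0 : ℕ → M → ProbabilityMeasure M) (μ : ProbabilityMeasure M) : Set M :=
  {x | pOmega S0 x = {μ}}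

/-- The `ρ`-weak basin of statistical attraction
`A^ρ_μ = {x : dist*(pω_x, μ) < ρ}`. -/
def weakBasin (dstar : ProbabilityMeasure M → ProbabilityMeasure M → ℝ)
    (S0 : ℕ → M → ProbabilityMeasure M) (ρ : ℝ) (μ : ProbabilityMeasure M) : Set M :=
  {x | ∃ ν ∈ pOmega S0 x, dstar ν μ < ρ}

/-- The basin of empiric stochastic stability `Â_μ` of a measure `μ`. -/
def empBasin (dstar : ProbabilityMeasure M → ProbabilityMeasure M → ℝ)
    (S : ℝ → ℕ → M → ProbabilityMeasure M) (μ : ProbabilityMeasure M) : Set M :=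
  {x | ∀ ρ > (0 : ℝ), ∃ N : ℕ, ∀ n ≥ N, ∃ ε₀ > (0 : ℝ), ∀ ε : ℝ, 0 < ε → ε ≤ ε₀ →
    dstar (S ε n x) μ < ρ}

/-- `μ` is `f`-invariant: `f_* μ = μ`. -/
def IsInvariant (f : M → M) (μ : ProbabilityMeasure M) : Prop :=
  (μ : Measure M).map f = (μ : Measure M)

/-- An `f`-invariant measure `μ` is physical if its strong basin of statistical
attraction has positive `m`-measure. -/
def Physical (f : M → M) (m : Measure M) (S0 : ℕ → M → ProbabilityMeasure M)
    (μ : ProbabilityMeasure M) : Prop :=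
  IsInvariant f μ ∧ 0 < m (strongBasin S0 μ)

/-- An `f`-invariant measure `μ` is pseudo-physical if all its `ρ`-weak basins of
statistical attraction have positive `m`-measure. -/
def PseudoPhysical (f : M → M) (m : Measure M)
    (dstar : ProbabilityMeasure M → ProbabilityMeasure M → ℝ)
    (S0 : ℕ → M → ProbabilityMeasure M) (μ : ProbabilityMeasure M) : Prop :=
  IsInvariant f μ ∧ ∀ ρ > (0 : ℝ), 0 < m (weakBasin dstar S0 ρ μ)

/-- A probability measure `μ` is empirically stochastically stable. -/
def EmpStochStable (m : Measure M)
    (dstar : ProbabilityMeasure M → ProbabilityMeasure M → ℝ)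
    (S : ℝ → ℕ → M → ProbabilityMeasure M) (μ : ProbabilityMeasure M) : Prop :=
  ∃ A : Set M, MeasurableSet A ∧ 0 < m A ∧
    ∀ ρ > (0 : ℝ), ∃ N : ℕ, ∀ n ≥ N, ∃ ε₀ > (0 : ℝ), ∀ ε : ℝ, 0 < ε → ε ≤ ε₀ →
      ∀ᵐ x ∂m, x ∈ A → dstar (S ε n x) μ < ρ

/-- `μ` is globally empirically stochastically stable: it is empirically stochastically
stable and its basin `Â_μ` has full `m`-measure. -/
def GloballyEmpStochStable (m : Measure M)
    (dstar : ProbabilityMeasure M → ProbabilityMeasure M → ℝ)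
    (S : ℝ → ℕ → M → ProbabilityMeasure M) (μ : ProbabilityMeasure M) : Prop :=
  EmpStochStable m dstar S μ ∧ m (empBasin dstar S μ)ᶜ = 0

/-- `dist*(σ, K) := inf_{μ ∈ K} dist*(σ, μ)` (a minimum when `K` is compact). -/
noncomputable def dstarSet (dstar : ProbabilityMeasure M → ProbabilityMeasure M → ℝ)
    (σ : ProbabilityMeasure M) (K : Set (ProbabilityMeasure M)) : ℝ :=
  sInf ((fun μ => dstar σ μ) '' K)

/-- The basin of empiric stochastic stability `Â_K` of a set of measures `K`. -/
noncomputable def empBasinSet (dstar : ProbabilityMeasure M → ProbabilityMeasure M → ℝ)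
    (S : ℝ → ℕ → M → ProbabilityMeasure M) (K : Set (ProbabilityMeasure M)) : Set M :=
  {x | ∀ ρ > (0 : ℝ), ∃ N : ℕ, ∀ n ≥ N, ∃ ε₀ > (0 : ℝ), ∀ ε : ℝ, 0 < ε → ε ≤ ε₀ →
    dstarSet dstar (S ε n x) K < ρ}

/-- The strong basin of statistical attraction `A_K = {x : pω_x ⊆ K}` of a set `K`. -/
def strongBasinSet (S0 : ℕ → M → ProbabilityMeasure M)
    (K : Set (ProbabilityMeasure M)) : Set M :=
  {x | pOmega S0 x ⊆ K}

/-- A nonempty weak*-compact set `K` of `f`-invariant measures is empirically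
stochastically stable: (a) uniform approximation on a positive-measure set, and
(b) minimality with respect to the basins. -/
noncomputable def EmpStochStableSet (f : M → M) (m : Measure M)
    (dstar : ProbabilityMeasure M → ProbabilityMeasure M → ℝ)
    (S : ℝ → ℕ → M → ProbabilityMeasure M) (K : Set (ProbabilityMeasure M)) : Prop :=
  K.Nonempty ∧ IsCompact K ∧ (∀ μ ∈ K, IsInvariant f μ) ∧
  (∃ A : Set M, MeasurableSet A ∧ 0 < m A ∧
    ∀ ρ > (0 : ℝ), ∃ N : ℕ, ∀ n ≥ N, ∃ ε₀ > (0 : ℝ), ∀ ε : ℝ, 0 < ε → ε ≤ ε₀ →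
      ∀ x ∈ A, dstarSet dstar (S ε n x) K < ρ) ∧
  (∀ K' : Set (ProbabilityMeasure M), K'.Nonempty → IsCompact K' →
    (∀ μ ∈ K', IsInvariant f μ) →
    m (empBasinSet dstar S K \ empBasinSet dstar S K') = 0 → K ⊆ K')

/-- `K` is globally empirically stochastically stable: it is empirically stochastically
stable and its basin `Â_K` has full `m`-measure. -/
noncomputable def GloballyEmpStochStableSet (f : M → M) (m : Measure M)
    (dstar : ProbabilityMeasure M → ProbabilityMeasure M → ℝ)
    (S : ℝ → ℕ → M → ProbabilityMeasure M) (K : Set (ProbabilityMeasure M)) : Prop :=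
  EmpStochStableSet f m dstar S K ∧ m (empBasinSet dstar S K)ᶜ = 0


set_option linter.unusedSectionVars false
set_option maxHeartbeats 1000000


/-- Kernel average of `ψ` over the ball of radius `ε` around `f x`. -/
noncomputable def nker (m : Measure M) (f : M → M) (ψ : M → ℝ) (ε : ℝ) (x : M) : ℝ :=
  (∫ y in Metric.ball (f x) ε, ψ y ∂m) / (m (Metric.ball (f x) ε)).toReal

/-- Iterated kernel averages. -/
noncomputable def gseq (m : Measure M) (f : M → M) (φ : M → ℝ) : ℕ → ℝ → M → ℝ
  | 0 => fun _ x => φ x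
  | j + 1 => fun ε x => nker m f (gseq m f φ j ε) ε x

lemma abs_nker_le {m : Measure M} [IsFiniteMeasure m] {f : M → M} {ψ : M → ℝ} {C : ℝ}
    (hC0 : 0 ≤ C) (hC : ∀ y, |ψ y| ≤ C) (ε : ℝ) (x : M) : |nker m f ψ ε x| ≤ C := by
  set B := Metric.ball (f x) ε
  set t := (m B).toReal with ht
  have ht0 : 0 ≤ t := ENNReal.toReal_nonneg
  have hnum : |∫ y in B, ψ y ∂m| ≤ C * t := by
    by_cases hint : IntegrableOn ψ B m
    · calc |∫ y in B, ψ y ∂m| ≤ ∫ y in B, |ψ y| ∂m := by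
            simpa [Real.norm_eq_abs] using norm_integral_le_integral_norm (μ := m.restrict B) ψ
      _ ≤ ∫ _y in B, C ∂m := by
            refine integral_mono_of_nonneg (Eventually.of_forall fun y => abs_nonneg _)
              (integrable_const C) (Eventually.of_forall fun y => hC y)
      _ = C * t := by simp [smul_eq_mul, mul_comm]; left; rfl
    · rw [integral_undef hint]
      simpa using mul_nonneg hC0 ht0
  rcases eq_or_ne t 0 with h0 | h0
  · rw [nker, show (m (Metric.ball (f x) ε)).toReal = 0 from h0]
    simp [hC0]
  · have htpos : 0 < t := lt_of_le_of_ne ht0 (Ne.symm h0)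
    rw [nker, abs_div, abs_of_nonneg ht0]
    rw [div_le_iff₀ htpos]
    exact hnum

lemma gseq_abs_le {m : Measure M} [IsFiniteMeasure m] {f : M → M} {φ : M → ℝ} {C : ℝ}
    (hC0 : 0 ≤ C) (hC : ∀ y, |φ y| ≤ C) :
    ∀ (j : ℕ) (ε : ℝ) (x : M), |gseq m f φ j ε x| ≤ C := by
  intro j
  induction j with
  | zero => intro ε x; exact hC x
  | succ j ih =>
    intro ε x
    exact abs_nker_le hC0 (fun y => ih ε y) ε x

lemma integral_ball_contAt {m : Measure M} [IsFiniteMeasure m] {f : M → M} (hf : Continuous f)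
    (hsph : ∀ (z : M) (r : ℝ), m (Metric.sphere z r) = 0)
    {ψ : ℝ → M → ℝ} {C : ℝ} (hC0 : 0 ≤ C)
    (hψc : ∀ {ε' : ℝ}, 0 < ε' → ∀ y : M, ContinuousAt (fun p : ℝ × M => ψ p.1 p.2) (ε', y))
    (hψb : ∀ (ε' : ℝ) (y : M), |ψ ε' y| ≤ C) {ε : ℝ} (hε : 0 < ε) (x : M) :
    ContinuousAt
      (fun p : ℝ × M => ∫ y, (Metric.ball (f p.2) p.1).indicator (ψ p.1) y ∂m) (ε, x) := by
  have hpos : ∀ᶠ p : ℝ × M in 𝓝 (ε, x), 0 < p.1 :=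
    (isOpen_lt continuous_const continuous_fst).mem_nhds (by simpa using hε)
  refine tendsto_integral_filter_of_dominated_convergence (fun _ => C) ?_ ?_
    (integrable_const C) ?_
  · filter_upwards [hpos] with p hp
    have hcont : Continuous (ψ p.1) := by
      rw [continuous_iff_continuousAt]
      intro y
      exact (hψc hp y).comp ((continuous_const.prodMk continuous_id).continuousAt)
    exact (hcont.aestronglyMeasurable).indicator measurableSet_ball
  · refine Eventually.of_forall fun p => Eventually.of_forall fun y => ?_
    by_cases hy : y ∈ Metric.ball (f p.2) p.1
    · rw [Set.indicator_of_mem hy]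
      simpa [Real.norm_eq_abs] using hψb p.1 y
    · rw [Set.indicator_of_notMem hy]
      simpa using hC0
  · have hnull : ∀ᵐ y ∂m, y ∉ Metric.sphere (f x) ε := by
      have h0 : m {y | ¬ y ∉ Metric.sphere (f x) ε} = 0 := by
        simp only [not_not, Set.setOf_mem_eq]
        exact hsph (f x) ε
      exact (MeasureTheory.ae_iff).mpr h0
    filter_upwards [hnull] with y hy
    have hne : dist y (f x) ≠ ε := by simpa [Metric.mem_sphere] using hy
    rcases hne.lt_or_gt with hlt | hgt
    · -- eventually inside the ball
      have hev : ∀ᶠ p : ℝ × M in 𝓝 (ε, x), dist y (f p.2) < p.1 := by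
        have : IsOpen {p : ℝ × M | dist y (f p.2) < p.1} :=
          isOpen_lt (continuous_const.dist (hf.comp continuous_snd)) continuous_fst
        exact this.mem_nhds (by simpa using hlt)
      have hmem : y ∈ Metric.ball (f x) ε := by simpa [Metric.mem_ball] using hlt
      have htend : Tendsto (fun p : ℝ × M => ψ p.1 y) (𝓝 (ε, x)) (𝓝 (ψ ε y)) := by
        have h1 : Tendsto (fun p : ℝ × M => (p.1, y)) (𝓝 (ε, x)) (𝓝 (ε, y)) :=
          (continuous_fst.prodMk continuous_const).tendsto (ε, x)
        exact Filter.Tendsto.comp (hψc hε y) h1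
      rw [Set.indicator_of_mem hmem]
      refine htend.congr' ?_
      filter_upwards [hev] with p hp
      exact (Set.indicator_of_mem (by simpa [Metric.mem_ball] using hp) _).symm
    · -- eventually outside the ball
      have hev : ∀ᶠ p : ℝ × M in 𝓝 (ε, x), p.1 < dist y (f p.2) := by
        have : IsOpen {p : ℝ × M | p.1 < dist y (f p.2)} :=
          isOpen_lt continuous_fst (continuous_const.dist (hf.comp continuous_snd))
        exact this.mem_nhds (by simpa using hgt)
      have hmem : y ∉ Metric.ball (f x) ε := by simp [Metric.mem_ball, not_lt, hgt.le]
      rw [Set.indicator_of_notMem hmem]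
      refine tendsto_const_nhds.congr' ?_
      filter_upwards [hev] with p hp
      exact (Set.indicator_of_notMem (by simp [Metric.mem_ball, not_lt, hp.le]) _).symm



lemma gseq_contAt {m : Measure M} [IsFiniteMeasure m] {f : M → M} (hf : Continuous f)
    (hball : ∀ (z : M) (r : ℝ), 0 < r → 0 < m (Metric.ball z r))
    (hsph : ∀ (z : M) (r : ℝ), m (Metric.sphere z r) = 0)
    {φ : M → ℝ} (hφ : Continuous φ) {C : ℝ} (hC0 : 0 ≤ C) (hC : ∀ y, |φ y| ≤ C) :
    ∀ (j : ℕ) {ε : ℝ}, 0 < ε → ∀ (x : M),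
      ContinuousAt (fun p : ℝ × M => gseq m f φ j p.1 p.2) (ε, x) := by
  intro j
  induction j with
  | zero =>
    intro ε hε x
    exact (hφ.comp continuous_snd).continuousAt
  | succ j ih =>
    intro ε hε x
    have hN : ContinuousAt
        (fun p : ℝ × M => ∫ y, (Metric.ball (f p.2) p.1).indicator (gseq m f φ j p.1) y ∂m)
        (ε, x) :=
      integral_ball_contAt hf hsph hC0 (fun {ε'} hε' y => ih hε' y)
        (fun ε' y => gseq_abs_le hC0 hC j ε' y) hε x
    have hD : ContinuousAt
        (fun p : ℝ × M => ∫ y, (Metric.ball (f p.2) p.1).indicator (fun _ => (1:ℝ)) y ∂m)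
        (ε, x) :=
      integral_ball_contAt (ψ := fun _ _ => (1:ℝ)) hf hsph zero_le_one
        (fun {ε'} hε' y => continuousAt_const) (fun ε' y => by norm_num) hε x
    have hDval : (∫ y, (Metric.ball (f x) ε).indicator (fun _ => (1:ℝ)) y ∂m)
        = (m (Metric.ball (f x) ε)).toReal := by
      simpa [Measure.real, Pi.one_def] using MeasureTheory.integral_indicator_one (measurableSet_ball
        (x := f x) (ε := ε))
    have hDne : (∫ y, (Metric.ball (f x) ε).indicator (fun _ => (1:ℝ)) y ∂m) ≠ 0 := by
      rw [hDval]
      exact (ENNReal.toReal_pos (hball (f x) ε hε).ne' (measure_ne_top m _)).ne'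
    have hdiv := ContinuousAt.div hN hD hDne
    have hfun : ∀ p : ℝ × M, gseq m f φ (j + 1) p.1 p.2 =
        (∫ y, (Metric.ball (f p.2) p.1).indicator (gseq m f φ j p.1) y ∂m) /
        (∫ y, (Metric.ball (f p.2) p.1).indicator (fun _ => (1:ℝ)) y ∂m) := by
      intro p
      have h1 : (∫ y, (Metric.ball (f p.2) p.1).indicator (gseq m f φ j p.1) y ∂m)
          = ∫ y in Metric.ball (f p.2) p.1, gseq m f φ j p.1 y ∂m :=
        MeasureTheory.integral_indicator measurableSet_ball
      have h2 : (∫ y, (Metric.ball (f p.2) p.1).indicator (fun _ => (1:ℝ)) y ∂m)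
          = (m (Metric.ball (f p.2) p.1)).toReal := by
        simpa [Measure.real, Pi.one_def] using MeasureTheory.integral_indicator_one (measurableSet_ball
          (x := f p.2) (ε := p.1))
      rw [h1, h2]
      rfl
    have heq : (fun p : ℝ × M => gseq m f φ (j + 1) p.1 p.2) =
        (fun p : ℝ × M => ∫ y, (Metric.ball (f p.2) p.1).indicator (gseq m f φ j p.1) y ∂m) /
        (fun p : ℝ × M => ∫ y, (Metric.ball (f p.2) p.1).indicator (fun _ => (1:ℝ)) y ∂m) :=
      funext hfun
    rw [heq]
    exact hdiv


lemma gseq_shift (m : Measure M) (f : M → M) (φ : M → ℝ) (ε : ℝ) :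
    ∀ j : ℕ, gseq m f (fun y => nker m f φ ε y) j ε = gseq m f φ (j + 1) ε := by
  intro j
  induction j with
  | zero => rfl
  | succ j ih =>
    funext x
    show nker m f (gseq m f (fun y => nker m f φ ε y) j ε) ε x
      = nker m f (gseq m f φ (j + 1) ε) ε x
    rw [ih]

lemma P_coe {f : M → M} {m : Measure M} {P : ℝ → M → ProbabilityMeasure M}
    (hP : IsTransitionKernel f m P) {ε : ℝ} (hε : 0 < ε) (x : M) :
    (P ε x : Measure M)
      = (m (Metric.ball (f x) ε))⁻¹ • m.restrict (Metric.ball (f x) ε) := by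
  refine Measure.ext fun A hA => ?_
  rw [hP ε hε x A hA, Measure.smul_apply, Measure.restrict_apply hA, smul_eq_mul,
    ENNReal.div_eq_inv_mul]

lemma integral_P {f : M → M} {m : Measure M} {P : ℝ → M → ProbabilityMeasure M}
    (hP : IsTransitionKernel f m P) {ε : ℝ} (hε : 0 < ε) (x : M) (ψ : M → ℝ) :
    ∫ y, ψ y ∂(P ε x : Measure M) = nker m f ψ ε x := by
  rw [P_coe hP hε x, integral_smul_measure, nker, ENNReal.toReal_inv, smul_eq_mul,
    div_eq_inv_mul]

lemma nker_continuous {m : Measure M} [IsFiniteMeasure m] {f : M → M} (hf : Continuous f)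
    (hball : ∀ (z : M) (r : ℝ), 0 < r → 0 < m (Metric.ball z r))
    (hsph : ∀ (z : M) (r : ℝ), m (Metric.sphere z r) = 0)
    {φ : M → ℝ} (hφ : Continuous φ) {C : ℝ} (hC0 : 0 ≤ C) (hC : ∀ y, |φ y| ≤ C)
    {ε : ℝ} (hε : 0 < ε) : Continuous (fun y => nker m f φ ε y) := by
  have heq : (fun y => nker m f φ ε y) = fun y => gseq m f φ 1 ε y := by
    funext y; simp [gseq]
  rw [heq, continuous_iff_continuousAt]
  intro y
  have h1 : Tendsto (fun q : M => ((ε, q) : ℝ × M)) (𝓝 y) (𝓝 (ε, y)) :=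
    (continuous_const.prodMk continuous_id).tendsto y
  have h2 := Filter.Tendsto.comp (gseq_contAt hf hball hsph hφ hC0 hC 1 hε y) h1
  exact h2

lemma integral_iterate [CompactSpace M] {f : M → M} {m : Measure M} [IsFiniteMeasure m]
    {P : ℝ → M → ProbabilityMeasure M} {Lop : ℝ → ProbabilityMeasure M → ProbabilityMeasure M}
    (hf : Continuous f)
    (hball : ∀ (z : M) (r : ℝ), 0 < r → 0 < m (Metric.ball z r))
    (hsph : ∀ (z : M) (r : ℝ), m (Metric.sphere z r) = 0)
    (hP : IsTransitionKernel f m P) (hL : IsDualTransfer P Lop) {ε : ℝ} (hε : 0 < ε) :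
    ∀ (j : ℕ) (φ : C(M, ℝ)) (x : M),
      ∫ y, φ y ∂((Lop ε)^[j] (diracProb x) : Measure M) = gseq m f φ j ε x := by
  intro j
  induction j with
  | zero =>
    intro φ x
    show ∫ y, φ y ∂(Measure.dirac x) = φ x
    exact integral_dirac _ x
  | succ j ih =>
    intro φ x
    have hb : ∀ y, |φ y| ≤ ‖φ‖ := by
      intro y
      simpa [Real.norm_eq_abs] using φ.norm_coe_le_norm y
    set ψc : C(M, ℝ) :=
      ⟨fun y => nker m f φ ε y,
        nker_continuous hf hball hsph φ.continuous (norm_nonneg φ) hb hε⟩ with hψc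
    rw [Function.iterate_succ_apply', hL ε hε _ φ]
    have hrw : (fun x' => ∫ y, φ y ∂(P ε x' : Measure M)) = fun x' => ψc x' :=
      funext fun x' => integral_P hP hε x' φ
    calc ∫ x', (∫ y, φ y ∂(P ε x' : Measure M)) ∂((Lop ε)^[j] (diracProb x) : Measure M)
        = ∫ x', ψc x' ∂((Lop ε)^[j] (diracProb x) : Measure M) := by rw [hrw]
      _ = gseq m f ψc j ε x := ih ψc x
      _ = gseq m f φ (j + 1) ε x := congrFun (gseq_shift m f φ ε j) x

lemma integral_S [CompactSpace M] {f : M → M} {m : Measure M} [IsFiniteMeasure m]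
    {P : ℝ → M → ProbabilityMeasure M} {Lop : ℝ → ProbabilityMeasure M → ProbabilityMeasure M}
    {S : ℝ → ℕ → M → ProbabilityMeasure M}
    (hf : Continuous f)
    (hball : ∀ (z : M) (r : ℝ), 0 < r → 0 < m (Metric.ball z r))
    (hsph : ∀ (z : M) (r : ℝ), m (Metric.sphere z r) = 0)
    (hP : IsTransitionKernel f m P) (hL : IsDualTransfer P Lop)
    (hS : IsEmpiricStochastic Lop S) {n : ℕ} (hn : 1 ≤ n) {ε : ℝ} (hε : 0 < ε) (x : M)
    (φ : C(M, ℝ)) :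
    ∫ y, φ y ∂(S ε n x : Measure M)
      = (n : ℝ)⁻¹ * ∑ j ∈ Finset.range n, gseq m f φ (j + 1) ε x := by
  rw [hS ε hε n hn x, integral_smul_measure]
  have hint : ∀ j ∈ Finset.range n,
      Integrable (fun y => φ y) (((Lop ε)^[j + 1] (diracProb x)) : Measure M) := by
    intro j _
    exact BoundedContinuousFunction.integrable _ (BoundedContinuousFunction.mkOfCompact φ)
  rw [integral_finset_sum_measure hint]
  have h1 : ((n : ℝ≥0∞)⁻¹).toReal = (n : ℝ)⁻¹ := by
    simp [ENNReal.toReal_inv]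
  rw [h1, smul_eq_mul]
  congr 1
  exact Finset.sum_congr rfl fun j _ => integral_iterate hf hball hsph hP hL hε (j + 1) φ x

lemma S_tendsto [CompactSpace M] {f : M → M} {m : Measure M} [IsFiniteMeasure m]
    {P : ℝ → M → ProbabilityMeasure M} {Lop : ℝ → ProbabilityMeasure M → ProbabilityMeasure M}
    {S : ℝ → ℕ → M → ProbabilityMeasure M}
    (hf : Continuous f)
    (hball : ∀ (z : M) (r : ℝ), 0 < r → 0 < m (Metric.ball z r))
    (hsph : ∀ (z : M) (r : ℝ), m (Metric.sphere z r) = 0)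
    (hP : IsTransitionKernel f m P) (hL : IsDualTransfer P Lop)
    (hS : IsEmpiricStochastic Lop S) {n : ℕ} (hn : 1 ≤ n) {ε : ℝ} (hε : 0 < ε) (x : M) :
    Tendsto (fun p : ℝ × M => S p.1 n p.2) (𝓝 (ε, x)) (𝓝 (S ε n x)) := by
  rw [ProbabilityMeasure.tendsto_iff_forall_integral_tendsto]
  intro φb
  have hb : ∀ y, |φb y| ≤ ‖φb‖ := by
    intro y
    simpa [Real.norm_eq_abs] using φb.norm_coe_le_norm y
  set φc : C(M, ℝ) := φb.toContinuousMap with hφc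
  have hpos : ∀ᶠ p : ℝ × M in 𝓝 (ε, x), 0 < p.1 :=
    (isOpen_lt continuous_const continuous_fst).mem_nhds (by simpa using hε)
  have hev : (fun p : ℝ × M =>
        (n : ℝ)⁻¹ * ∑ j ∈ Finset.range n, gseq m f φc (j + 1) p.1 p.2)
      =ᶠ[𝓝 (ε, x)] fun p : ℝ × M => ∫ y, φb y ∂(S p.1 n p.2 : Measure M) := by
    filter_upwards [hpos] with p hp
    exact (integral_S hf hball hsph hP hL hS hn hp p.2 φc).symm
  have hlim : ∫ y, φb y ∂(S ε n x : Measure M)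
      = (n : ℝ)⁻¹ * ∑ j ∈ Finset.range n, gseq m f φc (j + 1) ε x :=
    integral_S hf hball hsph hP hL hS hn hε x φc
  rw [hlim]
  refine Tendsto.congr' hev ?_
  exact Tendsto.const_mul _ (tendsto_finset_sum _ fun j _ =>
    gseq_contAt hf hball hsph φc.continuous (norm_nonneg φb) hb (j + 1) hε x)

lemma dstar_tendsto {dstar : ProbabilityMeasure M → ProbabilityMeasure M → ℝ}
    (hd : MetrizesWeakStar dstar) {μ σ₀ : ProbabilityMeasure M} {α : Type*} {l : Filter α}
    {F : α → ProbabilityMeasure M} (hF : Tendsto F l (𝓝 σ₀)) :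
    Tendsto (fun t => dstar (F t) μ) l (𝓝 (dstar σ₀ μ)) := by
  obtain ⟨hid, hsymm, htri, hnhds⟩ := hd
  rw [Metric.tendsto_nhds]
  intro δ hδ
  have hmem : {ν | dstar ν σ₀ < δ} ∈ 𝓝 σ₀ := (hnhds σ₀ _).mpr ⟨δ, hδ, subset_rfl⟩
  filter_upwards [hF hmem] with t ht
  have ht' : dstar (F t) σ₀ < δ := ht
  rw [Real.dist_eq, abs_sub_lt_iff]
  constructor
  · have h1 := htri (F t) σ₀ μ
    linarith
  · have h1 := htri σ₀ (F t) μ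
    have h2 := hsymm σ₀ (F t)
    linarith


lemma dstar_S_contX [CompactSpace M] {f : M → M} {m : Measure M} [IsFiniteMeasure m]
    {P : ℝ → M → ProbabilityMeasure M} {Lop : ℝ → ProbabilityMeasure M → ProbabilityMeasure M}
    {S : ℝ → ℕ → M → ProbabilityMeasure M}
    {dstar : ProbabilityMeasure M → ProbabilityMeasure M → ℝ}
    (hf : Continuous f)
    (hball : ∀ (z : M) (r : ℝ), 0 < r → 0 < m (Metric.ball z r))
    (hsph : ∀ (z : M) (r : ℝ), m (Metric.sphere z r) = 0)
    (hP : IsTransitionKernel f m P) (hL : IsDualTransfer P Lop)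
    (hS : IsEmpiricStochastic Lop S) (hd : MetrizesWeakStar dstar)
    (μ : ProbabilityMeasure M) {n : ℕ} (hn : 1 ≤ n) {ε : ℝ} (hε : 0 < ε) :
    Continuous (fun x : M => dstar (S ε n x) μ) := by
  rw [continuous_iff_continuousAt]
  intro z
  have h1 : Tendsto (fun q : M => ((ε, q) : ℝ × M)) (𝓝 z) (𝓝 (ε, z)) :=
    (continuous_const.prodMk continuous_id).tendsto z
  have h2 := Filter.Tendsto.comp (S_tendsto hf hball hsph hP hL hS hn hε z) h1
  exact dstar_tendsto hd h2

lemma dstar_S_contE [CompactSpace M] {f : M → M} {m : Measure M} [IsFiniteMeasure m]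
    {P : ℝ → M → ProbabilityMeasure M} {Lop : ℝ → ProbabilityMeasure M → ProbabilityMeasure M}
    {S : ℝ → ℕ → M → ProbabilityMeasure M}
    {dstar : ProbabilityMeasure M → ProbabilityMeasure M → ℝ}
    (hf : Continuous f)
    (hball : ∀ (z : M) (r : ℝ), 0 < r → 0 < m (Metric.ball z r))
    (hsph : ∀ (z : M) (r : ℝ), m (Metric.sphere z r) = 0)
    (hP : IsTransitionKernel f m P) (hL : IsDualTransfer P Lop)
    (hS : IsEmpiricStochastic Lop S) (hd : MetrizesWeakStar dstar)
    (μ : ProbabilityMeasure M) {n : ℕ} (hn : 1 ≤ n) {ε : ℝ} (hε : 0 < ε) (x : M) :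
    Tendsto (fun ε' : ℝ => dstar (S ε' n x) μ) (𝓝 ε) (𝓝 (dstar (S ε n x) μ)) := by
  have h1 : Tendsto (fun ε' : ℝ => ((ε', x) : ℝ × M)) (𝓝 ε) (𝓝 (ε, x)) :=
    (continuous_id.prodMk continuous_const).tendsto ε
  have h2 := Filter.Tendsto.comp (S_tendsto hf hball hsph hP hL hS hn hε x) h1
  exact dstar_tendsto hd h2


lemma tsum_budget (c : ℝ≥0∞) (n : ℕ) :
    ∑' k : ℕ, c * (2:ℝ≥0∞)⁻¹^(k+n) = c * 2⁻¹^n * 2 := by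
  have h : ∀ k, c * (2:ℝ≥0∞)⁻¹^(k+n) = c * 2⁻¹^n * 2⁻¹^k := by
    intro k; rw [pow_add]; ring
  simp only [h]
  rw [ENNReal.tsum_mul_left, ENNReal.tsum_geometric, ENNReal.one_sub_inv_two, inv_inv]

lemma inv_two_mul_two : (2:ℝ≥0∞)⁻¹ * 2 = 1 :=
  ENNReal.inv_mul_cancel (by norm_num) (by norm_num)

theorem statement_9 {M : Type*} [MetricSpace M] [CompactSpace M] [MeasurableSpace M]
    [BorelSpace M] (f : M → M) (hf : Continuous f)
    (m : Measure M) [IsFiniteMeasure m]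
    (hball : ∀ (z : M) (r : ℝ), 0 < r → 0 < m (Metric.ball z r))
    (hsph : ∀ (z : M) (r : ℝ), m (Metric.sphere z r) = 0)
    (P : ℝ → M → ProbabilityMeasure M) (hP : IsTransitionKernel f m P)
    (Lop : ℝ → ProbabilityMeasure M → ProbabilityMeasure M) (hL : IsDualTransfer P Lop)
    (S : ℝ → ℕ → M → ProbabilityMeasure M) (hS : IsEmpiricStochastic Lop S)
    (dstar : ProbabilityMeasure M → ProbabilityMeasure M → ℝ) (hd : MetrizesWeakStar dstar) :
    ∀ μ : ProbabilityMeasure M,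
      EmpStochStable m dstar S μ ↔ 0 < m (empBasin dstar S μ) := by
  intro μ
  constructor
  · -- forward direction
    rintro ⟨A, hAmeas, hApos, hA⟩
    have hq : ∀ k : ℕ, ∃ N, ∀ n ≥ N, ∃ ε₀ > (0:ℝ), ∀ ε, 0 < ε → ε ≤ ε₀ →
        ∀ᵐ x ∂m, x ∈ A → dstar (S ε n x) μ < 1/((k:ℝ)+1)/2 :=
      fun k => hA (1/((k:ℝ)+1)/2) (by positivity)
    choose N hN using hq
    have hN' : ∀ k n, ∃ ε₀, 0 < ε₀ ∧ (N k ≤ n → ∀ ε, 0 < ε → ε ≤ ε₀ →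
        ∀ᵐ x ∂m, x ∈ A → dstar (S ε n x) μ < 1/((k:ℝ)+1)/2) := by
      intro k n
      by_cases hn : N k ≤ n
      · obtain ⟨ε₀, hε₀, h⟩ := hN k n hn
        exact ⟨ε₀, hε₀, fun _ => h⟩
      · exact ⟨1, one_pos, fun h => absurd h hn⟩
    choose ε₀ hε₀pos hε₀ using hN'
    set Z : Set M := ⋃ (k : ℕ) (n : ℕ) (r : ℚ),
      {x | x ∈ A ∧ (0 < (r:ℝ) ∧ N k ≤ n ∧ (r:ℝ) ≤ ε₀ k n) ∧
        ¬ dstar (S (r:ℝ) n x) μ < 1/((k:ℝ)+1)/2} with hZdef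
    have hZ : m Z = 0 := by
      refine measure_iUnion_null fun k => measure_iUnion_null fun n =>
        measure_iUnion_null fun r => ?_
      by_cases hcond : 0 < (r:ℝ) ∧ N k ≤ n ∧ (r:ℝ) ≤ ε₀ k n
      · obtain ⟨hr, hn, hrle⟩ := hcond
        have hae := hε₀ k n hn (r:ℝ) hr hrle
        have h0 := ae_iff.mp hae
        refine measure_mono_null ?_ h0
        intro x hx
        simp only [mem_setOf_eq] at hx ⊢
        push_neg
        exact ⟨hx.1, not_lt.mp hx.2.2⟩
      · refine measure_mono_null (fun x hx => (hcond hx.2.1).elim) (measure_empty (α := M))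
    have hsub : A ⊆ empBasin dstar S μ ∪ Z := by
      intro x hxA
      by_cases hxZ : x ∈ Z
      · exact Or.inr hxZ
      · left
        intro ρ hρ
        obtain ⟨k, hk⟩ := exists_nat_one_div_lt hρ
        refine ⟨max (N k) 1, fun n hn => ?_⟩
        have hnN : N k ≤ n := le_trans (le_max_left _ _) hn
        have hn1 : 1 ≤ n := le_trans (le_max_right _ _) hn
        refine ⟨ε₀ k n, hε₀pos k n, fun ε hε1 hε2 => ?_⟩
        have hrat : ∀ r : ℚ, 0 < (r:ℝ) → (r:ℝ) ≤ ε₀ k n →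
            dstar (S (r:ℝ) n x) μ < 1/((k:ℝ)+1)/2 := by
          intro r hr hrle
          by_contra hcon
          refine hxZ ?_
          rw [hZdef]
          refine mem_iUnion.mpr ⟨k, mem_iUnion.mpr ⟨n, mem_iUnion.mpr ⟨r, ?_⟩⟩⟩
          exact ⟨hxA, ⟨hr, hnN, hrle⟩, hcon⟩
        have hle : dstar (S ε n x) μ ≤ 1/((k:ℝ)+1)/2 := by
          by_contra hgt
          push_neg at hgt
          have hcontE := dstar_S_contE hf hball hsph hP hL hS hd μ hn1 hε1 x
          have hev : ∀ᶠ ε' in 𝓝 ε, 1/((k:ℝ)+1)/2 < dstar (S ε' n x) μ :=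
            hcontE.eventually_const_lt hgt
          obtain ⟨η, hη, hball'⟩ := Metric.mem_nhds_iff.mp hev
          have hlt : max (ε - η) (ε/2) < ε := max_lt (by linarith) (by linarith)
          obtain ⟨r, hr1, hr2⟩ := exists_rat_btwn hlt
          have hεη : ε - η ≤ max (ε - η) (ε/2) := le_max_left _ _
          have hε2' : ε/2 ≤ max (ε - η) (ε/2) := le_max_right _ _
          have hrpos : 0 < (r:ℝ) := by linarith
          have hrball : (r:ℝ) ∈ Metric.ball ε η := by
            rw [Metric.mem_ball, Real.dist_eq, abs_sub_lt_iff]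
            constructor <;> linarith
          have h1 := hball' hrball
          have h2 := hrat r hrpos (le_trans hr2.le hε2)
          simp only [mem_setOf_eq] at h1
          linarith
        have hhalf : 1/((k:ℝ)+1)/2 < 1/((k:ℝ)+1) := by
          have : (0:ℝ) < 1/((k:ℝ)+1) := by positivity
          linarith
        linarith
    have h1 : m A ≤ m (empBasin dstar S μ ∪ Z) := measure_mono hsub
    have h2 : m (empBasin dstar S μ ∪ Z) ≤ m (empBasin dstar S μ) + m Z :=
      measure_union_le _ _
    rw [hZ, add_zero] at h2
    exact lt_of_lt_of_le hApos (le_trans h1 h2)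
  · -- reverse direction
    intro hpos
    set Bas := empBasin dstar S μ with hBasdef
    set T := toMeasurable m Bas with hTdef
    have hTmeas : MeasurableSet T := measurableSet_toMeasurable m Bas
    have hTm : m T = m Bas := measure_toMeasurable Bas
    have hBT : Bas ⊆ T := subset_toMeasurable m Bas
    have hane : m Bas ≠ 0 := hpos.ne'
    have hafin : m Bas ≠ ⊤ :=
      ne_top_of_le_ne_top (measure_ne_top m univ) (measure_mono (subset_univ _))
    set D : ℕ → ℕ → ℕ → Set M := fun k n j =>
      ⋂ ε ∈ Ioc (0:ℝ) (1/((j:ℝ)+1)), {x | dstar (S ε n x) μ ≤ 1/((k:ℝ)+1)} with hDdef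
    have hDmeas : ∀ k n j, 1 ≤ n → MeasurableSet (D k n j) := by
      intro k n j hn
      refine (isClosed_biInter fun ε hε => ?_).measurableSet
      exact IsClosed.preimage (dstar_S_contX hf hball hsph hP hL hS hd μ hn hε.1) isClosed_Iic
    set E : ℕ → ℕ → Set M := fun k NN => ⋂ (i:ℕ), ⋃ (j:ℕ), D k (NN+1+i) j with hEdef
    have hEmeas : ∀ k NN, MeasurableSet (E k NN) := fun k NN =>
      MeasurableSet.iInter fun i => MeasurableSet.iUnion fun j => hDmeas k _ j (by omega)
    have hEmono : ∀ k, Monotone (E k) := by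
      intro k NN NN' hNN x hx
      refine mem_iInter.mpr fun i => ?_
      have h := mem_iInter.mp hx (NN' - NN + i)
      have heq : NN + 1 + (NN' - NN + i) = NN' + 1 + i := by omega
      rwa [heq] at h
    have hBasE : ∀ k, Bas ⊆ ⋃ NN, E k NN := by
      intro k x hx
      obtain ⟨N₀, hN₀⟩ := hx (1/((k:ℝ)+1)) (by positivity)
      refine mem_iUnion.mpr ⟨N₀, mem_iInter.mpr fun i => ?_⟩
      obtain ⟨e0, he0, hprop⟩ := hN₀ (N₀+1+i) (by omega)
      obtain ⟨j, hj⟩ := exists_nat_one_div_lt he0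
      refine mem_iUnion.mpr ⟨j, mem_iInter₂.mpr fun ε hε => ?_⟩
      exact le_of_lt (hprop ε hε.1 (le_trans hε.2 hj.le))
    -- choose N
    have hchooseN : ∀ k : ℕ, ∃ NN, m (T \ E k NN) < m Bas * (2:ℝ≥0∞)⁻¹^(k+2) := by
      intro k
      have hanti : Antitone (fun NN => T \ E k NN) := fun a b hab =>
        diff_subset_diff_right (hEmono k hab)
      have htend := tendsto_measure_iInter_atTop (μ := m) (s := fun NN => T \ E k NN)
        (fun NN => (hTmeas.diff (hEmeas k NN)).nullMeasurableSet) hanti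
        ⟨0, measure_ne_top m _⟩
      have hiInter : (⋂ NN, (T \ E k NN)) = T \ ⋃ NN, E k NN := (diff_iUnion _ _).symm
      have hzero : m (T \ ⋃ NN, E k NN) = 0 := by
        have hG : MeasurableSet (⋃ NN, E k NN) := MeasurableSet.iUnion (hEmeas k)
        have hTG : m (T ∩ ⋃ NN, E k NN) = m T := by
          refine le_antisymm (measure_mono inter_subset_left) ?_
          rw [hTm]
          exact measure_mono (subset_inter hBT (hBasE k))
        have hadd := measure_inter_add_diff (μ := m) T hG
        rw [hTG] at hadd
        have hfinT : m T ≠ ⊤ := by rw [hTm]; exact hafin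
        exact (ENNReal.add_right_inj hfinT).mp (by rw [add_zero]; exact hadd)
      simp only [hiInter, hzero] at htend
      have hbpos : (0:ℝ≥0∞) < m Bas * (2:ℝ≥0∞)⁻¹^(k+2) :=
        pos_iff_ne_zero.mpr (mul_ne_zero hane (pow_ne_zero _ (by norm_num)))
      exact (htend.eventually_lt_const hbpos).exists
    choose NB hNB using hchooseN
    -- choose j
    have hchooseJ : ∀ k i : ℕ, ∃ j, m ((T ∩ E k (NB k)) \ D k (NB k + 1 + i) j)
        < (m Bas * (2:ℝ≥0∞)⁻¹^(k+3)) * (2:ℝ≥0∞)⁻¹^(i+1) := by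
      intro k i
      have hGmeas : MeasurableSet (T ∩ E k (NB k)) := hTmeas.inter (hEmeas _ _)
      have hDmono : Monotone (fun j => D k (NB k + 1 + i) j) := by
        intro j j' hj x hx
        refine mem_iInter₂.mpr fun ε hε => ?_
        refine mem_iInter₂.mp hx ε ⟨hε.1, le_trans hε.2 ?_⟩
        apply one_div_le_one_div_of_le (by positivity)
        exact_mod_cast by omega
      have hanti : Antitone (fun j => (T ∩ E k (NB k)) \ D k (NB k + 1 + i) j) :=
        fun a b hab => diff_subset_diff_right (hDmono hab)
      have hzero : m ((T ∩ E k (NB k)) \ ⋃ j, D k (NB k + 1 + i) j) = 0 := by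
        have hsubset : (T ∩ E k (NB k)) ⊆ ⋃ j, D k (NB k + 1 + i) j := fun x hx =>
          mem_iInter.mp hx.2 i
        rw [diff_eq_empty.mpr hsubset]
        exact measure_empty
      have htend := tendsto_measure_iInter_atTop (μ := m)
        (s := fun j => (T ∩ E k (NB k)) \ D k (NB k + 1 + i) j)
        (fun j => (hGmeas.diff (hDmeas k _ j (by omega))).nullMeasurableSet) hanti
        ⟨0, measure_ne_top m _⟩
      have hiInter : (⋂ j, ((T ∩ E k (NB k)) \ D k (NB k + 1 + i) j))
          = (T ∩ E k (NB k)) \ ⋃ j, D k (NB k + 1 + i) j := (diff_iUnion _ _).symm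
      simp only [hiInter, hzero] at htend
      have hbpos : (0:ℝ≥0∞) < (m Bas * (2:ℝ≥0∞)⁻¹^(k+3)) * (2:ℝ≥0∞)⁻¹^(i+1) :=
        pos_iff_ne_zero.mpr (mul_ne_zero (mul_ne_zero hane (pow_ne_zero _ (by norm_num)))
          (pow_ne_zero _ (by norm_num)))
      exact (htend.eventually_lt_const hbpos).exists
    choose JB hJB using hchooseJ
    set A := T ∩ ⋂ (k:ℕ), ⋂ (i:ℕ), D k (NB k + 1 + i) (JB k i) with hAdef
    have hAmeas : MeasurableSet A := hTmeas.inter (MeasurableSet.iInter fun k =>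
      MeasurableSet.iInter fun i => hDmeas k _ _ (by omega))
    have hcover : T \ A ⊆ (⋃ k, T \ E k (NB k)) ∪
        ⋃ (k) (i), ((T ∩ E k (NB k)) \ D k (NB k + 1 + i) (JB k i)) := by
      intro x hx
      obtain ⟨hxT, hxn⟩ := hx
      have hex : ∃ k i, x ∉ D k (NB k + 1 + i) (JB k i) := by
        by_contra hc
        push_neg at hc
        exact hxn ⟨hxT, mem_iInter.mpr fun k => mem_iInter.mpr fun i => hc k i⟩
      obtain ⟨k, i, hxD⟩ := hex
      by_cases hxE : x ∈ E k (NB k)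
      · exact Or.inr (mem_iUnion.mpr ⟨k, mem_iUnion.mpr ⟨i, ⟨⟨hxT, hxE⟩, hxD⟩⟩⟩)
      · exact Or.inl (mem_iUnion.mpr ⟨k, ⟨hxT, hxE⟩⟩)
    have hsum1 : m (⋃ k, T \ E k (NB k)) ≤ m Bas * 2⁻¹ := by
      calc m (⋃ k, T \ E k (NB k)) ≤ ∑' k, m (T \ E k (NB k)) := measure_iUnion_le _
        _ ≤ ∑' k, m Bas * (2:ℝ≥0∞)⁻¹^(k+2) := ENNReal.tsum_le_tsum fun k => (hNB k).le
        _ = m Bas * 2⁻¹^2 * 2 := tsum_budget _ 2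
        _ = m Bas * 2⁻¹ := by rw [sq, mul_assoc, mul_assoc, inv_two_mul_two, mul_one]
    have hsum2 : m (⋃ (k) (i), ((T ∩ E k (NB k)) \ D k (NB k + 1 + i) (JB k i)))
        ≤ m Bas * (2⁻¹ * 2⁻¹) := by
      calc m (⋃ (k) (i), ((T ∩ E k (NB k)) \ D k (NB k + 1 + i) (JB k i)))
          ≤ ∑' k, m (⋃ i, ((T ∩ E k (NB k)) \ D k (NB k + 1 + i) (JB k i))) :=
            measure_iUnion_le _
        _ ≤ ∑' k, ∑' i, m ((T ∩ E k (NB k)) \ D k (NB k + 1 + i) (JB k i)) :=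
            ENNReal.tsum_le_tsum fun k => measure_iUnion_le _
        _ ≤ ∑' k, ∑' i, (m Bas * (2:ℝ≥0∞)⁻¹^(k+3)) * (2:ℝ≥0∞)⁻¹^(i+1) :=
            ENNReal.tsum_le_tsum fun k => ENNReal.tsum_le_tsum fun i => (hJB k i).le
        _ = ∑' k, (m Bas * (2:ℝ≥0∞)⁻¹^(k+3)) * 2⁻¹^1 * 2 :=
            tsum_congr fun k => tsum_budget _ 1
        _ = ∑' k, m Bas * (2:ℝ≥0∞)⁻¹^(k+3) := by
            refine tsum_congr fun k => ?_
            rw [pow_one, mul_assoc, inv_two_mul_two, mul_one]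
        _ = m Bas * 2⁻¹^3 * 2 := tsum_budget _ 3
        _ = m Bas * (2⁻¹ * 2⁻¹) := by
            rw [pow_succ, sq, mul_assoc, mul_assoc, mul_assoc, inv_two_mul_two, mul_one]
    have htot : m (T \ A) < m Bas := by
      have hle : m (T \ A) ≤ m Bas * 2⁻¹ + m Bas * (2⁻¹ * 2⁻¹) :=
        le_trans (measure_mono hcover)
          (le_trans (measure_union_le _ _) (add_le_add hsum1 hsum2))
      have heq : m Bas * 2⁻¹ + m Bas * (2⁻¹ * 2⁻¹) = m Bas * (2⁻¹ + 2⁻¹ * 2⁻¹) := by ring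
      rw [heq] at hle
      refine lt_of_le_of_lt hle ?_
      have hlt1 : (2:ℝ≥0∞)⁻¹ < 1 := ENNReal.inv_lt_one.mpr (by norm_num)
      have hh : (2:ℝ≥0∞)⁻¹ * 2⁻¹ < 2⁻¹ := by
        have := (ENNReal.mul_lt_mul_left (a := (2:ℝ≥0∞)⁻¹) (b := (2:ℝ≥0∞)⁻¹) (c := 1)
          (by norm_num) (by norm_num)) hlt1
        simpa using this
      have h1 : (2:ℝ≥0∞)⁻¹ + 2⁻¹ * 2⁻¹ < 1 := by
        calc (2:ℝ≥0∞)⁻¹ + 2⁻¹*2⁻¹ < 2⁻¹ + 2⁻¹ := ENNReal.add_lt_add_left (by norm_num) hh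
          _ = 1 := ENNReal.inv_two_add_inv_two
      calc m Bas * (2⁻¹ + 2⁻¹ * 2⁻¹) < m Bas * 1 := by
            rw [mul_comm (m Bas), mul_comm (m Bas)]
            exact ENNReal.mul_lt_mul_left hane hafin h1
        _ = m Bas := mul_one _
    have hApos : 0 < m A := by
      rcases eq_or_ne (m A) 0 with h0 | h0
      · exfalso
        have hTsub : T ⊆ A ∪ (T \ A) := by
          intro x hx
          by_cases hxA : x ∈ A
          exacts [Or.inl hxA, Or.inr ⟨hx, hxA⟩]
        have hle := le_trans (measure_mono hTsub) (measure_union_le (μ := m) A (T \ A))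
        rw [h0, zero_add, hTm] at hle
        exact absurd (lt_of_le_of_lt hle htot) (lt_irrefl _)
      · exact pos_iff_ne_zero.mpr h0
    refine ⟨A, hAmeas, hApos, ?_⟩
    intro ρ hρ
    obtain ⟨k, hk⟩ := exists_nat_one_div_lt hρ
    refine ⟨NB k + 1, fun n hn => ?_⟩
    obtain ⟨i, hni⟩ : ∃ i, n = NB k + 1 + i := ⟨n - (NB k + 1), by omega⟩
    refine ⟨1/((JB k i : ℝ)+1), by positivity, fun ε hε1 hε2 => ?_⟩
    refine Eventually.of_forall fun x hxA => ?_
    have hxD : x ∈ D k n (JB k i) := by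
      rw [hni]
      exact mem_iInter.mp (mem_iInter.mp hxA.2 k) i
    have hle := mem_iInter₂.mp hxD ε ⟨hε1, hε2⟩
    exact lt_of_le_of_lt hle hk

end EmpStoch
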